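/- Let N ≥ 1, Λ > 1, r₀ > 0, Φ > 0, and suppose the pressure vector p ∈ ℝ^{2^N} satisfies p = π* u_N for some real π* (all outlet pressures equal). Set ξ*_{i,j} = (Λ-1)/(N·2^i) for all (i,j) ∈ B_N. Then the flow vector q* determined by the Poiseuille relations satisfies q*_{i,j} = Φ/2^i for all (i,j), and the dissipated energy equals E(q*,ξ*) = r₀Φ²(1 + N²/(Λ-1)). -/

import Mathlib

open Finset

/-- If all outlet pressures are equal (`p = π* u_N`) and the geometry is the
symmetric one `ξ*_{i,j} = (Λ-1)/(N·2^i)`, then the Poiseuille flow satisfies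
`q*_{i,j} = Φ/2^i` on every branch and the dissipated energy equals
`r₀Φ²(1 + N²/(Λ-1))`.  Branch `(i,j)` (level `i ∈ {1,…,N}`, `1 ≤ j ≤ 2^i`)
has daughters `(i+1, 2j-1)` and `(i+1, 2j)`; the root branch is `(0,1)` and
`p i j` is the pressure at the outlet of branch `(i,j)`. -/
theorem stmt7 (N : ℕ) (hN : 1 ≤ N) (Λ r0 Φ πstar : ℝ) (hΛ : 1 < Λ)
    (hr0 : 0 < r0) (hΦ : 0 < Φ)
    (ξ q p : ℕ → ℕ → ℝ)
    (hξ : ∀ i ∈ Finset.Icc 1 N, ∀ j ∈ Finset.Icc 1 (2 ^ i),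
      ξ i j = (Λ - 1) / (N * 2 ^ i))
    -- the root branch carries the total flow Φ
    (hroot : q 0 1 = Φ)
    -- conservation of flow at each bifurcation
    (hcons : ∀ i ∈ Finset.Icc 0 (N - 1), ∀ j ∈ Finset.Icc 1 (2 ^ i),
      q i j = q (i + 1) (2 * j - 1) + q (i + 1) (2 * j))
    -- Poiseuille's law on each daughter branch
    (hpois : ∀ i ∈ Finset.Icc 0 (N - 1), ∀ j ∈ Finset.Icc 1 (2 ^ i),
      p i j - p (i + 1) (2 * j - 1)
          = r0 * q (i + 1) (2 * j - 1) / ξ (i + 1) (2 * j - 1) ∧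
        p i j - p (i + 1) (2 * j) = r0 * q (i + 1) (2 * j) / ξ (i + 1) (2 * j))
    -- all outlet pressures are equal to π*
    (hout : ∀ j ∈ Finset.Icc 1 (2 ^ N), p N j = πstar) :
    (∀ i ∈ Finset.Icc 1 N, ∀ j ∈ Finset.Icc 1 (2 ^ i), q i j = Φ / 2 ^ i) ∧
      r0 * Φ ^ 2 + ∑ i ∈ Finset.Icc 1 N, ∑ j ∈ Finset.Icc 1 (2 ^ i),
          r0 * (q i j) ^ 2 / ξ i j
        = r0 * Φ ^ 2 * (1 + (N : ℝ) ^ 2 / (Λ - 1)) := by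
  have hΛ' : (0:ℝ) < Λ - 1 := by linarith
  have hNpos : (0:ℝ) < (N:ℝ) := by exact_mod_cast Nat.lt_of_lt_of_le Nat.zero_lt_one hN
  have hξvpos : ∀ i : ℕ, (0:ℝ) < (Λ - 1) / ((N:ℝ) * 2 ^ i) :=
    fun i => div_pos hΛ' (mul_pos hNpos (by positivity))
  -- the key step lemma
  have step : ∀ (i : ℕ), i + 1 ≤ N → ∀ (c a : ℝ), 0 ≤ a →
      (∀ j ∈ Finset.Icc 1 (2 ^ (i+1)), p (i+1) j = c + a * q (i+1) j) →
      ∀ j ∈ Finset.Icc 1 (2 ^ i),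
        q (i+1) (2*j-1) = q i j / 2 ∧ q (i+1) (2*j) = q i j / 2 ∧
        p i j = c + ((a + r0 / ((Λ - 1) / ((N:ℝ) * 2 ^ (i+1)))) / 2) * q i j := by
    intro i hi c a ha hrep j hj
    simp only [Finset.mem_Icc] at hj
    have hpow : (2:ℕ) ^ (i+1) = 2 * 2 ^ i := by ring
    have hmi : i ∈ Finset.Icc 0 (N-1) := by simp [Finset.mem_Icc]; omega
    have hmj : j ∈ Finset.Icc 1 (2^i) := by simp [Finset.mem_Icc]; omega
    have hd1 : 2*j-1 ∈ Finset.Icc 1 (2^(i+1)) := by simp [Finset.mem_Icc]; omega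
    have hd2 : 2*j ∈ Finset.Icc 1 (2^(i+1)) := by simp [Finset.mem_Icc]; omega
    obtain ⟨hp1, hp2⟩ := hpois i hmi j hmj
    have hc := hcons i hmi j hmj
    set ξv := (Λ - 1) / ((N:ℝ) * 2 ^ (i+1)) with hξvdef
    have hξv : 0 < ξv := hξvpos (i+1)
    have hξ1 : ξ (i+1) (2*j-1) = ξv := hξ (i+1) (by simp [Finset.mem_Icc]; omega) _ hd1
    have hξ2 : ξ (i+1) (2*j) = ξv := hξ (i+1) (by simp [Finset.mem_Icc]; omega) _ hd2
    rw [hξ1, hrep _ hd1] at hp1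
    rw [hξ2, hrep _ hd2] at hp2
    have hb : 0 < a + r0 / ξv := add_pos_of_nonneg_of_pos ha (div_pos hr0 hξv)
    have e1 : p i j = c + (a + r0 / ξv) * q (i+1) (2*j-1) := by
      have : r0 * q (i+1) (2*j-1) / ξv = r0 / ξv * q (i+1) (2*j-1) := by ring
      rw [this] at hp1
      linarith [hp1]
    have e2 : p i j = c + (a + r0 / ξv) * q (i+1) (2*j) := by
      have : r0 * q (i+1) (2*j) / ξv = r0 / ξv * q (i+1) (2*j) := by ring
      rw [this] at hp2
      linarith [hp2]
    have heq : q (i+1) (2*j-1) = q (i+1) (2*j) := by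
      have h' : (a + r0 / ξv) * q (i+1) (2*j-1) = (a + r0 / ξv) * q (i+1) (2*j) := by
        linarith
      exact mul_left_cancel₀ hb.ne' h'
    refine ⟨by linarith, by linarith, ?_⟩
    have hq1 : q (i+1) (2*j-1) = q i j / 2 := by linarith
    rw [hq1] at e1
    linear_combination e1
  -- downward induction: at each level pressures are affine in flows
  have H : ∀ k, k ≤ N → ∃ c a : ℝ, 0 ≤ a ∧
      ∀ j ∈ Finset.Icc 1 (2 ^ (N - k)), p (N - k) j = c + a * q (N - k) j := by
    intro k
    induction k with
    | zero =>
      intro _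
      refine ⟨πstar, 0, le_rfl, fun j hj => ?_⟩
      simp only [Nat.sub_zero] at hj ⊢
      simp [hout j hj]
    | succ k ih =>
      intro hk
      obtain ⟨c, a, ha, hrep⟩ := ih (by omega)
      set i := N - (k+1) with hidef
      have hi1 : N - k = i + 1 := by omega
      rw [hi1] at hrep
      refine ⟨c, (a + r0 / ((Λ - 1) / ((N:ℝ) * 2 ^ (i+1)))) / 2, ?_, ?_⟩
      · have := hξvpos (i+1)
        have : 0 ≤ r0 / ((Λ - 1) / ((N:ℝ) * 2 ^ (i+1))) := le_of_lt (div_pos hr0 this)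
        linarith
      · intro j hj
        exact (step i (by omega) c a ha hrep j hj).2.2
  -- sibling flows are halves of parent flow
  have Hq : ∀ i, i + 1 ≤ N → ∀ j ∈ Finset.Icc 1 (2^i),
      q (i+1) (2*j-1) = q i j / 2 ∧ q (i+1) (2*j) = q i j / 2 := by
    intro i hi j hj
    obtain ⟨c, a, ha, hrep⟩ := H (N - (i+1)) (by omega)
    have hE : N - (N - (i+1)) = i + 1 := by omega
    rw [hE] at hrep
    exact ⟨(step i hi c a ha hrep j hj).1, (step i hi c a ha hrep j hj).2.1⟩
  -- flows by forward induction
  have Hflow : ∀ i, i ≤ N → ∀ j, 1 ≤ j → j ≤ 2^i → q i j = Φ / 2^i := by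
    intro i
    induction i with
    | zero =>
      intro _ j h1 h2
      interval_cases j
      simpa using hroot
    | succ i ih =>
      intro hi j h1 h2
      have hpow : (2:ℕ) ^ (i+1) = 2 * 2 ^ i := by ring
      set m := (j+1)/2 with hmdef
      have hm1 : 1 ≤ m := by omega
      have hm2 : m ≤ 2^i := by omega
      have hq := Hq i hi m (by simp [Finset.mem_Icc]; omega)
      have hparent := ih (by omega) m hm1 hm2
      have hcase : j = 2*m - 1 ∨ j = 2*m := by omega
      have hhalf : q (i+1) j = q i m / 2 := by
        rcases hcase with h | h
        · rw [h]; exact hq.1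
        · rw [h]; exact hq.2
      rw [hhalf, hparent, pow_succ]
      ring
  constructor
  · intro i hi j hj
    simp only [Finset.mem_Icc] at hi hj
    exact Hflow i hi.2 j hj.1 hj.2
  · have hinner : ∀ i ∈ Finset.Icc 1 N,
        ∑ j ∈ Finset.Icc 1 (2^i), r0 * (q i j) ^ 2 / ξ i j
          = r0 * Φ ^ 2 * N / (Λ - 1) := by
      intro i hi
      have hi' : i ∈ Finset.Icc 1 N := hi
      simp only [Finset.mem_Icc] at hi
      have : ∀ j ∈ Finset.Icc 1 (2^i), r0 * (q i j) ^ 2 / ξ i j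
          = r0 * (Φ / 2^i) ^ 2 / ((Λ - 1) / ((N:ℝ) * 2 ^ i)) := by
        intro j hj
        simp only [Finset.mem_Icc] at hj
        rw [Hflow i hi.2 j hj.1 hj.2, hξ i hi' j (by simp [Finset.mem_Icc]; omega)]
      rw [Finset.sum_congr rfl this, Finset.sum_const, Nat.card_Icc]
      simp only [Nat.add_sub_cancel, nsmul_eq_mul, Nat.cast_pow, Nat.cast_ofNat]
      have h2 : ((2:ℝ)^i) ≠ 0 := by positivity
      field_simp
    rw [Finset.sum_congr rfl hinner, Finset.sum_const, Nat.card_Icc,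
      Nat.add_sub_cancel, nsmul_eq_mul]
    field_simp
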